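/- Let S*_T, given S*_t = s > 0, be distributed as c·Z where c = e^{τ̄_T} − e^{τ̄_t} > 0 and Z is noncentral chi-square with 4 degrees of freedom and noncentrality parameter λ = s/c. Then for K > 0, s · E[max(0, K − S*_T)/S*_T] = K(Ψ(K/c; 0, λ) − e^{−λ/2}) − s·Ψ(K/c; 4, λ), where Ψ(x; δ, λ) = P(χ²_δ(λ) ≤ x). -/

import Mathlib

open MeasureTheory ProbabilityTheory

/-- The central chi-square law with `d` degrees of freedom: the Gamma distribution
with shape `d/2` and rate `1/2` (for `d = 0` it is the point mass at `0`). -/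
noncomputable def chiSqMeasure (d : ℝ) : Measure ℝ :=
  if d = 0 then Measure.dirac 0 else gammaMeasure (d / 2) (1 / 2)

/-- The noncentral chi-square law with `δ` degrees of freedom and noncentrality `λ`:
the Poisson(λ/2)-mixture of central chi-square laws with `δ + 2k` degrees of freedom. -/
noncomputable def ncChiSqMeasure (δ lam : ℝ) : Measure ℝ :=
  Measure.sum fun k : ℕ =>
    (ENNReal.ofReal (Real.exp (-lam / 2) * (lam / 2) ^ k / (Nat.factorial k : ℝ))) •
      chiSqMeasure (δ + 2 * k)

/-- Noncentral chi-square distribution function `Ψ(x; δ, λ) = P(χ²_δ(λ) ≤ x)`. -/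
noncomputable def Psi (x δ lam : ℝ) : ℝ :=
  (ncChiSqMeasure δ lam (Set.Iic x)).toReal

/- ### Auxiliary lemmas -/

open scoped ENNReal NNReal

section Aux

open Set Real

/-- Gamma density ratio identity. -/
lemma mmm_gamma_ratio {b : ℝ} (hb : 0 < b) (z : ℝ) :
    gammaPDFReal (b + 1) (1 / 2) z = z / (2 * b) * gammaPDFReal b (1 / 2) z := by
  unfold gammaPDFReal
  split_ifs with h
  · rcases eq_or_lt_of_le h with h0 | h0
    · rw [← h0]
      rw [Real.zero_rpow (by linarith : b + 1 - 1 ≠ 0)]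
      ring
    · have hΓ : Real.Gamma (b + 1) = b * Real.Gamma b := Real.Gamma_add_one hb.ne'
      have hΓb : Real.Gamma b ≠ 0 := (Real.Gamma_pos_of_pos hb).ne'
      have hz1 : z ^ (b + 1 - 1) = z ^ (b - 1) * z := by
        rw [show b + 1 - 1 = b - 1 + 1 by ring, Real.rpow_add_one h0.ne']
      have hhalf : (1 / 2 : ℝ) ^ (b + 1) = (1 / 2 : ℝ) ^ b * (1 / 2) := by
        rw [Real.rpow_add_one (by norm_num : (1 / 2 : ℝ) ≠ 0)]
      rw [hΓ, hz1, hhalf]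
      field_simp
  · rw [mul_zero]

/-- The gamma measure puts no mass on `Iio 0`. -/
lemma mmm_gamma_Iio (a r : ℝ) : gammaMeasure a r (Set.Iio 0) = 0 := by
  rw [gammaMeasure, withDensity_apply _ measurableSet_Iio]
  exact lintegral_gammaPDF_of_nonpos le_rfl

/-- The gamma measure puts no mass on `Iic 0`. -/
lemma mmm_gamma_Iic0 (a r : ℝ) : gammaMeasure a r (Set.Iic 0) = 0 := by
  have h : Set.Iic (0 : ℝ) = Set.Iio 0 ∪ {0} := by
    ext x; simp [le_iff_lt_or_eq]
  rw [h]
  refine measure_union_null (mmm_gamma_Iio a r) ?_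
  have habs : gammaMeasure a r ≪ (volume : Measure ℝ) :=
    withDensity_absolutelyContinuous _ _
  exact habs (by simp)

lemma mmm_gamma_Iic_eq_Ioc (a r x : ℝ) (hx : 0 ≤ x) :
    gammaMeasure a r (Set.Iic x) = gammaMeasure a r (Set.Ioc 0 x) := by
  have h : Set.Iic x = Set.Iic 0 ∪ Set.Ioc 0 x := (Set.Iic_union_Ioc_eq_Iic hx).symm
  rw [h, measure_union (Set.Iic_disjoint_Ioc le_rfl) measurableSet_Ioc,
    mmm_gamma_Iic0, zero_add]

/-- Pointwise real identity combining the payoff with the gamma densities. -/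
lemma mmm_pointwise {b c K : ℝ} (hb : 0 < b) (hc : 0 < c) (hK : 0 < K) (z : ℝ) :
    gammaPDFReal (b + 1) (1 / 2) z * (max 0 (K - c * z) / (c * z))
      + (Set.Ioc 0 (K / c)).indicator (gammaPDFReal (b + 1) (1 / 2)) z
    = (Set.Ioc 0 (K / c)).indicator
        (fun y => K / c / (2 * b) * gammaPDFReal b (1 / 2) y) z := by
  by_cases hzmem : z ∈ Set.Ioc 0 (K / c)
  · rw [Set.indicator_of_mem hzmem, Set.indicator_of_mem hzmem]
    obtain ⟨hz0, hzx⟩ := hzmem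
    have hcz : c * z ≤ K := by
      have := (le_div_iff₀ hc).mp hzx
      linarith
    rw [max_eq_right (by linarith : (0 : ℝ) ≤ K - c * z), mmm_gamma_ratio hb]
    have hz' : z ≠ 0 := hz0.ne'
    field_simp
    ring
  · rw [Set.indicator_of_notMem hzmem, Set.indicator_of_notMem hzmem, add_zero]
    rcases lt_trichotomy z 0 with hz | hz | hz
    · unfold gammaPDFReal
      rw [if_neg (not_le.mpr hz), zero_mul]
    · rw [hz, mul_zero, div_zero, mul_zero]
    · have hzx : K / c < z := by
        by_contra hcon
        exact hzmem ⟨hz, not_lt.mp hcon⟩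
      have hKcz : K < c * z := by
        have := (div_lt_iff₀ hc).mp hzx
        linarith
      rw [max_eq_left (by linarith : K - c * z ≤ 0), zero_div, mul_zero]

lemma mmm_payoff_nonneg {c K : ℝ} (hc : 0 < c) (hK : 0 < K) {z : ℝ} (hz : 0 ≤ z) :
    0 ≤ max 0 (K - c * z) / (c * z) := by
  rcases eq_or_lt_of_le hz with h0 | h0
  · rw [← h0, mul_zero, div_zero]
  · exact div_nonneg (le_max_left _ _) (by positivity)

lemma mmm_payoff_measurable (c K : ℝ) :
    Measurable fun z : ℝ => max 0 (K - c * z) / (c * z) :=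
  (measurable_const.max (measurable_const.sub (measurable_id'.const_mul c))).div
    (measurable_id'.const_mul c)

/-- Pointwise `ℝ≥0∞` version. -/
lemma mmm_pointwise' {b c K : ℝ} (hb : 0 < b) (hc : 0 < c) (hK : 0 < K) (z : ℝ) :
    ENNReal.ofReal (gammaPDFReal (b + 1) (1 / 2) z * (max 0 (K - c * z) / (c * z)))
      + (Set.Ioc 0 (K / c)).indicator (gammaPDF (b + 1) (1 / 2)) z
    = (Set.Ioc 0 (K / c)).indicator
        (fun y => ENNReal.ofReal (K / c / (2 * b)) * gammaPDF b (1 / 2) y) z := by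
  have hx0 : 0 < K / c := div_pos hK hc
  by_cases hzmem : z ∈ Set.Ioc 0 (K / c)
  · rw [Set.indicator_of_mem hzmem, Set.indicator_of_mem hzmem]
    have hreal := mmm_pointwise hb hc hK z
    rw [Set.indicator_of_mem hzmem, Set.indicator_of_mem hzmem] at hreal
    have h1 : 0 ≤ gammaPDFReal (b + 1) (1 / 2) z * (max 0 (K - c * z) / (c * z)) :=
      mul_nonneg (gammaPDFReal_nonneg (by linarith) (by norm_num) z)
        (mmm_payoff_nonneg hc hK hzmem.1.le)
    have h2 : 0 ≤ gammaPDFReal (b + 1) (1 / 2) z :=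
      gammaPDFReal_nonneg (by linarith) (by norm_num) z
    calc ENNReal.ofReal (gammaPDFReal (b + 1) (1 / 2) z * (max 0 (K - c * z) / (c * z)))
          + gammaPDF (b + 1) (1 / 2) z
        = ENNReal.ofReal (gammaPDFReal (b + 1) (1 / 2) z * (max 0 (K - c * z) / (c * z))
            + gammaPDFReal (b + 1) (1 / 2) z) := by
          rw [ENNReal.ofReal_add h1 h2]; rfl
      _ = ENNReal.ofReal (K / c / (2 * b) * gammaPDFReal b (1 / 2) z) := by rw [hreal]
      _ = ENNReal.ofReal (K / c / (2 * b)) * gammaPDF b (1 / 2) z := by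
          rw [ENNReal.ofReal_mul (by positivity)]; rfl
  · rw [Set.indicator_of_notMem hzmem, Set.indicator_of_notMem hzmem, add_zero]
    have hreal := mmm_pointwise hb hc hK z
    rw [Set.indicator_of_notMem hzmem, Set.indicator_of_notMem hzmem, add_zero] at hreal
    rw [hreal, ENNReal.ofReal_zero]

/-- Core lintegral identity. -/
lemma mmm_core {b c K : ℝ} (hb : 0 < b) (hc : 0 < c) (hK : 0 < K) :
    (∫⁻ z, ENNReal.ofReal
        (gammaPDFReal (b + 1) (1 / 2) z * (max 0 (K - c * z) / (c * z))))
      + gammaMeasure (b + 1) (1 / 2) (Set.Iic (K / c))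
    = ENNReal.ofReal (K / c / (2 * b)) * gammaMeasure b (1 / 2) (Set.Iic (K / c)) := by
  have hx0 : 0 < K / c := div_pos hK hc
  have hmeasA : Measurable fun z =>
      ENNReal.ofReal (gammaPDFReal (b + 1) (1 / 2) z * (max 0 (K - c * z) / (c * z))) :=
    ((measurable_gammaPDFReal _ _).mul (mmm_payoff_measurable c K)).ennreal_ofReal
  have hpdf1 : Measurable (gammaPDF (b + 1) (1 / 2)) :=
    (measurable_gammaPDFReal _ _).ennreal_ofReal
  have hpdf2 : Measurable (gammaPDF b (1 / 2)) :=
    (measurable_gammaPDFReal _ _).ennreal_ofReal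
  rw [mmm_gamma_Iic_eq_Ioc _ _ _ hx0.le, mmm_gamma_Iic_eq_Ioc _ _ _ hx0.le,
    gammaMeasure, gammaMeasure, withDensity_apply _ measurableSet_Ioc,
    withDensity_apply _ measurableSet_Ioc,
    ← lintegral_indicator measurableSet_Ioc (gammaPDF (b + 1) (1 / 2)),
    ← lintegral_indicator measurableSet_Ioc (gammaPDF b (1 / 2)),
    ← lintegral_add_left hmeasA,
    ← lintegral_const_mul _ (hpdf2.indicator measurableSet_Ioc)]
  rw [show (fun a => ENNReal.ofReal (K / c / (2 * b)) *
        (Set.Ioc 0 (K / c)).indicator (gammaPDF b (1 / 2)) a)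
      = fun a => (Set.Ioc 0 (K / c)).indicator
          (fun y => ENNReal.ofReal (K / c / (2 * b)) * gammaPDF b (1 / 2) y) a by
    funext a
    by_cases ha : a ∈ Set.Ioc 0 (K / c) <;>
      simp [Set.indicator_of_mem, Set.indicator_of_notMem, ha]]
  exact lintegral_congr (mmm_pointwise' hb hc hK)

lemma mmm_chiSq_le_one {d : ℝ} (hd : 0 ≤ d) (s : Set ℝ) : chiSqMeasure d s ≤ 1 := by
  unfold chiSqMeasure
  split_ifs with h
  · exact prob_le_one
  · have hd' : 0 < d / 2 := by
      rcases eq_or_lt_of_le hd with h0 | h0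
      · exact absurd h0.symm h
      · positivity
    haveI := isProbabilityMeasure_gammaMeasure hd' (by norm_num : (0:ℝ) < 1 / 2)
    exact prob_le_one

end Aux

lemma mmm_lintegral_gamma {a : ℝ} (ha : 0 < a) {g : ℝ → ℝ} (hg : Measurable g) :
    ∫⁻ z, ENNReal.ofReal (g z) ∂(gammaMeasure a (1 / 2)) =
      ∫⁻ z, ENNReal.ofReal (gammaPDFReal a (1 / 2) z * g z) := by
  have hm : Measurable (gammaPDF a (1 / 2)) := (measurable_gammaPDFReal _ _).ennreal_ofReal
  rw [gammaMeasure, lintegral_withDensity_eq_lintegral_mul _ hm hg.ennreal_ofReal]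
  refine lintegral_congr fun z => ?_
  simp only [Pi.mul_apply]
  exact (ENNReal.ofReal_mul (gammaPDFReal_nonneg ha (by norm_num) z)).symm

/-- Benchmark-neutral put pricing formula under the minimal market model.  Given
`S*_t = s > 0`, the terminal stock GOP value is `S*_T = c·Z` with
`c = e^{τ̄_T} − e^{τ̄_t} > 0` and `Z` noncentral chi-square with 4 degrees of freedom
and noncentrality `λ = s/c`.  Then for a strike `K > 0`,
`s · E[max(0, K − S*_T)/S*_T] = K(Ψ(K/c; 0, λ) − e^{−λ/2}) − s·Ψ(K/c; 4, λ)`. -/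
theorem bn_put_price_formula (s c K : ℝ) (hs : 0 < s) (hc : 0 < c) (hK : 0 < K) :
    s * ∫ z, max 0 (K - c * z) / (c * z) ∂(ncChiSqMeasure 4 (s / c)) =
      K * (Psi (K / c) 0 (s / c) - Real.exp (-(s / c) / 2)) -
        s * Psi (K / c) 4 (s / c) := by
  have hlam : 0 < s / c := div_pos hs hc
  have hx0 : 0 < K / c := div_pos hK hc
  set lam := s / c with hlamdef
  set x0 := K / c with hx0def
  set f : ℝ → ℝ := fun z => max 0 (K - c * z) / (c * z) with hfdef
  set w : ℕ → ℝ≥0∞ := fun k =>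
    ENNReal.ofReal (Real.exp (-lam / 2) * (lam / 2) ^ k / (Nat.factorial k : ℝ)) with hwdef
  set P : ℝ → ℝ≥0∞ := fun a => gammaMeasure a (1 / 2) (Set.Iic x0) with hPdef
  set J : ℕ → ℝ≥0∞ := fun k =>
    ∫⁻ z, ENNReal.ofReal (gammaPDFReal ((k : ℝ) + 2) (1 / 2) z * f z) with hJdef
  set L : ℝ≥0∞ := ∫⁻ z, ENNReal.ofReal (f z) ∂(ncChiSqMeasure 4 lam) with hLdef
  set S4 : ℝ≥0∞ := ncChiSqMeasure 4 lam (Set.Iic x0) with hS4def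
  set S0 : ℝ≥0∞ := ncChiSqMeasure 0 lam (Set.Iic x0) with hS0def
  have hchi4 : ∀ k : ℕ, chiSqMeasure (4 + 2 * (k : ℝ)) = gammaMeasure ((k : ℝ) + 2) (1 / 2) := by
    intro k
    rw [chiSqMeasure, if_neg (by positivity : (4 : ℝ) + 2 * (k : ℝ) ≠ 0),
      show ((4 : ℝ) + 2 * (k : ℝ)) / 2 = (k : ℝ) + 2 by ring]
  -- F4 : core identity per k
  have hF4 : ∀ k : ℕ, J k + P ((k : ℝ) + 2) =
      ENNReal.ofReal (x0 / (2 * ((k : ℝ) + 1))) * P ((k : ℝ) + 1) := by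
    intro k
    have h := mmm_core (b := (k : ℝ) + 1) (by positivity) hc hK
    rw [show ((k : ℝ) + 1) + 1 = (k : ℝ) + 2 by ring] at h
    exact h
  -- F3 : the lintegral of the payoff
  have hL : L = ∑' k : ℕ, w k * J k := by
    rw [hLdef]
    simp only [ncChiSqMeasure, lintegral_sum_measure, lintegral_smul_measure]
    refine tsum_congr fun k => ?_
    congr 1
    rw [hchi4 k, mmm_lintegral_gamma (by positivity) (mmm_payoff_measurable c K)]
  -- F1
  have hS4 : S4 = ∑' k : ℕ, w k * P ((k : ℝ) + 2) := by
    rw [hS4def]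
    simp only [ncChiSqMeasure, Measure.sum_apply _ measurableSet_Iic,
      Measure.smul_apply, smul_eq_mul]
    refine tsum_congr fun k => ?_
    rw [hchi4 k]
  -- F2
  have hS0 : S0 = w 0 + ∑' k : ℕ, w (k + 1) * P ((k : ℝ) + 1) := by
    rw [hS0def]
    simp only [ncChiSqMeasure, Measure.sum_apply _ measurableSet_Iic,
      Measure.smul_apply, smul_eq_mul]
    rw [tsum_eq_zero_add' ENNReal.summable]
    congr 1
    · rw [show (0 : ℝ) + 2 * ((0 : ℕ) : ℝ) = 0 by norm_num, chiSqMeasure, if_pos rfl,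
        Measure.dirac_apply_of_mem (Set.mem_Iic.mpr hx0.le), mul_one]
    · refine tsum_congr fun k => ?_
      congr 1
      rw [show (0 : ℝ) + 2 * ((k + 1 : ℕ) : ℝ) = 2 * ((k : ℝ) + 1) by push_cast; ring,
        chiSqMeasure, if_neg (by positivity : 2 * ((k : ℝ) + 1) ≠ 0),
        show 2 * ((k : ℝ) + 1) / 2 = (k : ℝ) + 1 by ring]
  -- per-term weight identity
  have hwk : ∀ k : ℕ, ENNReal.ofReal s * w k * ENNReal.ofReal (x0 / (2 * ((k : ℝ) + 1))) =
      ENNReal.ofReal K * w (k + 1) := by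
    intro k
    rw [hwdef]
    simp only
    rw [← ENNReal.ofReal_mul hs.le, ← ENNReal.ofReal_mul (by positivity),
      ← ENNReal.ofReal_mul hK.le]
    congr 1
    rw [hlamdef, hx0def, Nat.factorial_succ, pow_succ]
    have hfk : ((Nat.factorial k : ℝ)) ≠ 0 := Nat.cast_ne_zero.mpr (Nat.factorial_ne_zero k)
    have hk1 : ((k : ℝ) + 1) ≠ 0 := by positivity
    push_cast
    field_simp
  -- the key ENNReal identity
  have key : ENNReal.ofReal s * L + ENNReal.ofReal K * w 0 + ENNReal.ofReal s * S4 =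
      ENNReal.ofReal K * S0 := by
    have step : ENNReal.ofReal s * L + ENNReal.ofReal s * S4 =
        ENNReal.ofReal K * ∑' k : ℕ, w (k + 1) * P ((k : ℝ) + 1) := by
      rw [← mul_add, hL, hS4, ← ENNReal.tsum_add, ← ENNReal.tsum_mul_left,
        ← ENNReal.tsum_mul_left]
      refine tsum_congr fun k => ?_
      rw [← mul_add (w k), hF4 k, ← mul_assoc, ← mul_assoc, hwk k, mul_assoc]
    calc ENNReal.ofReal s * L + ENNReal.ofReal K * w 0 + ENNReal.ofReal s * S4
        = (ENNReal.ofReal s * L + ENNReal.ofReal s * S4) + ENNReal.ofReal K * w 0 := by ring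
      _ = ENNReal.ofReal K * (w 0 + ∑' k : ℕ, w (k + 1) * P ((k : ℝ) + 1)) := by
          rw [step, mul_add]; ring
      _ = ENNReal.ofReal K * S0 := by rw [hS0]
  -- finiteness
  have hWfin : (∑' k : ℕ, w k) ≠ ⊤ := by
    rw [hwdef]
    simp only [mul_div_assoc]
    rw [← ENNReal.ofReal_tsum_of_nonneg (fun k => by positivity)
      ((Real.summable_pow_div_factorial (lam / 2)).mul_left _)]
    exact ENNReal.ofReal_ne_top
  have hS0le : S0 ≤ ∑' k : ℕ, w k := by
    rw [hS0def]
    simp only [ncChiSqMeasure, Measure.sum_apply _ measurableSet_Iic,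
      Measure.smul_apply, smul_eq_mul]
    refine ENNReal.tsum_le_tsum fun k => ?_
    calc w k * chiSqMeasure (0 + 2 * (k : ℝ)) (Set.Iic x0)
        ≤ w k * 1 := mul_le_mul_right (mmm_chiSq_le_one (by positivity) _) _
      _ = w k := mul_one _
  have hRfin : ENNReal.ofReal K * S0 ≠ ⊤ :=
    ENNReal.mul_ne_top ENNReal.ofReal_ne_top (ne_top_of_le_ne_top hWfin hS0le)
  have h1 : ENNReal.ofReal s * L ≠ ⊤ := by
    refine ne_top_of_le_ne_top hRfin ?_
    rw [← key]; exact le_add_right (le_add_right le_rfl)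
  have h2 : ENNReal.ofReal K * w 0 ≠ ⊤ := by
    refine ne_top_of_le_ne_top hRfin ?_
    rw [← key]; exact le_add_right le_add_self
  have h3 : ENNReal.ofReal s * S4 ≠ ⊤ := by
    refine ne_top_of_le_ne_top hRfin ?_
    rw [← key]; exact le_add_self
  -- pass to real numbers
  have hreal := congrArg ENNReal.toReal key
  rw [ENNReal.toReal_add (ENNReal.add_ne_top.mpr ⟨h1, h2⟩) h3, ENNReal.toReal_add h1 h2,
    ENNReal.toReal_mul, ENNReal.toReal_mul, ENNReal.toReal_mul, ENNReal.toReal_mul,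
    ENNReal.toReal_ofReal hs.le, ENNReal.toReal_ofReal hK.le] at hreal
  -- identify the integral
  have hnull : ncChiSqMeasure 4 lam (Set.Iio 0) = 0 := by
    simp only [ncChiSqMeasure, Measure.sum_apply _ measurableSet_Iio,
      Measure.smul_apply, smul_eq_mul]
    have hz : ∀ k : ℕ, w k * chiSqMeasure (4 + 2 * (k : ℝ)) (Set.Iio 0) = 0 := by
      intro k
      rw [hchi4 k, mmm_gamma_Iio, mul_zero]
    rw [tsum_congr hz, tsum_zero]
  have hae : 0 ≤ᵐ[ncChiSqMeasure 4 lam] f := by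
    have hz : ∀ᵐ z ∂(ncChiSqMeasure 4 lam), 0 ≤ z := by
      rw [MeasureTheory.ae_iff]
      rw [show {z : ℝ | ¬ 0 ≤ z} = Set.Iio 0 by ext x; simp]
      exact hnull
    filter_upwards [hz] with z hz0
    exact mmm_payoff_nonneg hc hK hz0
  have hint : ∫ z, f z ∂(ncChiSqMeasure 4 lam) = L.toReal := by
    rw [hLdef]
    exact integral_eq_lintegral_of_nonneg_ae hae
      (mmm_payoff_measurable c K).aestronglyMeasurable
  have hw0 : (w 0).toReal = Real.exp (-lam / 2) := by
    rw [hwdef]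
    simp [ENNReal.toReal_ofReal (Real.exp_nonneg _)]
  have hPsi0 : Psi x0 0 lam = S0.toReal := rfl
  have hPsi4 : Psi x0 4 lam = S4.toReal := rfl
  rw [hPsi0, hPsi4]
  have hint' : integral (ncChiSqMeasure 4 lam) f = L.toReal := hint
  rw [hint', ← hw0]
  linarith [hreal]
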